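/- Let V be a finite set, B, B' ⊆ V disjoint. For any prescribed reals J_{B∪{j}} for j ∈ B' and any ε > 0, there exist weights w ∈ ℝ^V (with w_i = 0 for i ∉ B ∪ B') and c ∈ ℝ such that the Möbius coefficients K_C(w,c) = ∑_{D ⊆ C} (-1)^{|C\D|} log(1 + exp(∑_{i∈D} w_i + c)) satisfy |K_{B∪{j}}(w,c) − J_{B∪{j}}| ≤ ε for all j ∈ B', and |K_C(w,c)| ≤ ε for every C ⊆ V with C ≠ B and C ∉ {B∪{j} : j ∈ B'}. -/

import Mathlib

open Finset Filter

noncomputable def softplusCoeff {V : Type*} [DecidableEq V]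
    (w : V → ℝ) (c : ℝ) (B : Finset V) : ℝ :=
  ∑ C ∈ B.powerset, (-1 : ℝ) ^ ((B \ C).card) * Real.log (1 + Real.exp (∑ i ∈ C, w i + c))

section Aux
variable {V : Type*} [DecidableEq V]

lemma alt_sum_powerset (A : Finset V) :
    ∑ T ∈ A.powerset, (-1:ℝ)^((A \ T).card) = if A = ∅ then 1 else 0 := by
  induction A using Finset.induction_on with
  | empty => simp
  | insert a A ha ih =>
    rw [Finset.sum_powerset_insert ha]
    have h1 : ∀ T ∈ A.powerset, (-1:ℝ)^((insert a A \ T).card) = -(-1:ℝ)^((A \ T).card) := by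
      intro T hT
      rw [Finset.mem_powerset] at hT
      have haT : a ∉ T := fun h => ha (hT h)
      rw [Finset.insert_sdiff_of_notMem _ haT, Finset.card_insert_of_notMem (by simp [ha]),
        pow_succ]
      ring
    have h2 : ∀ T ∈ A.powerset, (-1:ℝ)^((insert a A \ insert a T).card) = (-1:ℝ)^((A \ T).card) := by
      intro T hT
      rw [Finset.mem_powerset] at hT
      congr 2
      rw [Finset.insert_sdiff_insert]
      exact Finset.sdiff_insert_of_notMem ha T
    rw [Finset.sum_congr rfl h1, Finset.sum_congr rfl h2, Finset.sum_neg_distrib]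
    simp [Finset.insert_ne_empty]

lemma pairing (C : Finset V) {a : V} (ha : a ∈ C) (g : Finset V → ℝ) :
    ∑ D ∈ C.powerset, (-1:ℝ)^((C \ D).card) * g D
      = ∑ T ∈ (C.erase a).powerset,
          (-1:ℝ)^(((C.erase a) \ T).card) * (g (insert a T) - g T) := by
  have hC : C = insert a (C.erase a) := (Finset.insert_erase ha).symm
  have ha' : a ∉ C.erase a := Finset.notMem_erase a C
  conv_lhs => rw [hC, Finset.sum_powerset_insert ha']
  rw [← Finset.sum_add_distrib]
  apply Finset.sum_congr rfl
  intro T hT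
  rw [Finset.mem_powerset] at hT
  have haT : a ∉ T := fun h => ha' (hT h)
  have e1 : (insert a (C.erase a) \ T).card = ((C.erase a) \ T).card + 1 := by
    rw [Finset.insert_sdiff_of_notMem _ haT,
      Finset.card_insert_of_notMem (by simp [ha'])]
  have e2 : (insert a (C.erase a) \ insert a T).card = ((C.erase a) \ T).card := by
    congr 1
    rw [Finset.insert_sdiff_insert]
    exact Finset.sdiff_insert_of_notMem ha' T
  rw [e1, e2, pow_succ]
  ring

lemma softplusCoeff_eq_zero (w : V → ℝ) (c : ℝ) {C : Finset V} {a : V}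
    (ha : a ∈ C) (hw : w a = 0) : softplusCoeff w c C = 0 := by
  unfold softplusCoeff
  rw [pairing C ha]
  apply Finset.sum_eq_zero
  intro T hT
  rw [Finset.mem_powerset] at hT
  have haT : a ∉ T := fun h => (Finset.notMem_erase a C) (hT h)
  rw [Finset.sum_insert haT, hw, zero_add, sub_self, mul_zero]

lemma E_eval (J : V → ℝ) (A : Finset V) (hA : A.Nonempty) (x : ℝ) :
    ∑ S ∈ A.powerset, (-1:ℝ)^((A \ S).card) * (x + ∑ j ∈ S, J j)
      = if A.card = 1 then ∑ j ∈ A, J j else 0 := by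
  obtain ⟨a, ha⟩ := hA
  rw [pairing A ha]
  have h : ∀ T ∈ (A.erase a).powerset,
      (-1:ℝ)^(((A.erase a) \ T).card) * ((x + ∑ j ∈ insert a T, J j) - (x + ∑ j ∈ T, J j))
        = (-1:ℝ)^(((A.erase a) \ T).card) * J a := by
    intro T hT
    rw [Finset.mem_powerset] at hT
    have haT : a ∉ T := fun h => (Finset.notMem_erase a A) (hT h)
    rw [Finset.sum_insert haT]; ring
  rw [Finset.sum_congr rfl h, ← Finset.sum_mul, alt_sum_powerset]
  by_cases hA1 : A.erase a = ∅
  · have hAa : A = {a} := by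
      rcases (Finset.erase_eq_empty_iff A a).mp hA1 with h' | h'
      · exact absurd (h' ▸ ha) (Finset.notMem_empty a)
      · exact h'
    simp [hAa]
  · rw [if_neg hA1, zero_mul, if_neg]
    intro hcard
    rcases Finset.card_eq_one.mp hcard with ⟨b, hb⟩
    have hab : a = b := by rw [hb] at ha; simpa using ha
    apply hA1
    rw [hb, ← hab]
    simp

end Aux

lemma softplus_tendsto_zero :
    Tendsto (fun x : ℝ => Real.log (1 + Real.exp x)) atBot (nhds 0) := by
  have h1 : Tendsto (fun x : ℝ => 1 + Real.exp x) atBot (nhds 1) := by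
    simpa using tendsto_const_nhds.add Real.tendsto_exp_atBot
  have h2 := (Real.continuousAt_log (x := 1) one_ne_zero).tendsto.comp h1
  simpa [Function.comp_def] using h2

lemma softplus_eq (x : ℝ) :
    Real.log (1 + Real.exp x) = x + Real.log (1 + Real.exp (-x)) := by
  have h : (1:ℝ) + Real.exp x = Real.exp x * (1 + Real.exp (-x)) := by
    rw [mul_add, mul_one, ← Real.exp_add, add_neg_cancel, Real.exp_zero]; ring
  rw [h, Real.log_mul (Real.exp_ne_zero x) (by positivity), Real.log_exp]

lemma tendsto_lin_atBot {k : ℝ} (hk : k < 0) (t : ℝ) :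
    Tendsto (fun ω : ℝ => k * ω + t) atTop atBot := by
  apply Filter.tendsto_atBot_add_const_right
  exact Filter.Tendsto.const_mul_atTop_of_neg hk tendsto_id

section Main
variable {V : Type*} [DecidableEq V]

noncomputable def wfun (B B' : Finset V) (J : V → ℝ) (ω : ℝ) : V → ℝ :=
  fun i => if i ∈ B then ω else if i ∈ B' then J i else 0

noncomputable def cval (B : Finset V) (ω : ℝ) : ℝ := (1/2 - (B.card:ℝ)) * ω

lemma sum_wfun (B B' : Finset V) (J : V → ℝ) {D : Finset V} (hD : D ⊆ B ∪ B') (ω : ℝ) :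
    ∑ i ∈ D, wfun B B' J ω i + cval B ω
      = (((D ∩ B).card : ℝ) - B.card + 1/2) * ω + ∑ j ∈ D \ B, J j := by
  have h1 : ∑ i ∈ D, wfun B B' J ω i
      = ∑ i ∈ D.filter (fun i => i ∈ B), ω
        + ∑ i ∈ D.filter (fun i => i ∉ B), (if i ∈ B' then J i else 0) := by
    unfold wfun
    exact Finset.sum_ite _ _
  have h2 : ∑ i ∈ D.filter (fun i => i ∈ B), ω = ((D ∩ B).card : ℝ) * ω := by
    rw [Finset.filter_mem_eq_inter, Finset.sum_const, nsmul_eq_mul]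
  have h3 : ∑ i ∈ D.filter (fun i => i ∉ B), (if i ∈ B' then J i else 0)
      = ∑ j ∈ D \ B, J j := by
    rw [← Finset.sdiff_eq_filter]
    apply Finset.sum_congr rfl
    intro j hj
    rw [Finset.mem_sdiff] at hj
    have : j ∈ B' := by
      rcases Finset.mem_union.mp (hD hj.1) with h | h
      · exact absurd h hj.2
      · exact h
    rw [if_pos this]
  rw [h1, h2, h3]
  unfold cval
  ring
end Main
section MainK
variable {V : Type*} [DecidableEq V]

noncomputable def tgt (B : Finset V) (J : V → ℝ) (C : Finset V) : ℝ :=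
  if B ⊆ C ∧ (C \ B).card = 1 then ∑ j ∈ C \ B, J j else 0

lemma tendsto_K (B B' : Finset V) (J : V → ℝ)
    {C : Finset V} (hC : C ⊆ B ∪ B') (hCB : C ≠ B) :
    Tendsto (fun ω => softplusCoeff (wfun B B' J ω) (cval B ω) C) atTop
      (nhds (tgt B J C)) := by
  set kk : Finset V → ℝ := fun D => ((D ∩ B).card : ℝ) - B.card + 1/2 with hkk
  set tt : Finset V → ℝ := fun D => ∑ j ∈ D \ B, J j with htt
  have harg : ∀ (ω : ℝ), ∀ D ∈ C.powerset,
      (-1:ℝ)^((C \ D).card) * Real.log (1 + Real.exp (∑ i ∈ D, wfun B B' J ω i + cval B ω))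
        = (-1:ℝ)^((C \ D).card) * Real.log (1 + Real.exp (kk D * ω + tt D)) := by
    intro ω D hD
    rw [Finset.mem_powerset] at hD
    rw [sum_wfun B B' J (hD.trans hC) ω]
  -- negative-slope terms tend to zero
  have hterm0 : ∀ D : Finset V, D ⊆ C → ¬ B ⊆ D →
      Tendsto (fun ω => (-1:ℝ)^((C \ D).card) * Real.log (1 + Real.exp (kk D * ω + tt D)))
        atTop (nhds 0) := by
    intro D hDC hBD
    have hlt : (D ∩ B).card < B.card := by
      apply Finset.card_lt_card
      constructor
      · exact Finset.inter_subset_right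
      · intro hsub
        exact hBD (fun b hb => (Finset.mem_inter.mp (hsub hb)).1)
    have hk : kk D < 0 := by
      have : ((D ∩ B).card : ℝ) + 1 ≤ (B.card : ℝ) := by exact_mod_cast hlt
      simp only [hkk]
      linarith
    have := (softplus_tendsto_zero.comp (tendsto_lin_atBot hk (tt D))).const_mul
      ((-1:ℝ)^((C \ D).card))
    simpa using this
  by_cases hBC : B ⊆ C
  · -- main case
    have hA : (C \ B).Nonempty := Finset.sdiff_nonempty.mpr
      (fun h => hCB (Finset.Subset.antisymm h hBC))
    have key : ∀ ω : ℝ, softplusCoeff (wfun B B' J ω) (cval B ω) C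
        = tgt B J C
          + ∑ S ∈ (C \ B).powerset, (-1:ℝ)^(((C \ B) \ S).card)
              * Real.log (1 + Real.exp (-((1/2)*ω + ∑ j ∈ S, J j)))
          + ∑ D ∈ C.powerset.filter (fun D => ¬ B ⊆ D),
              (-1:ℝ)^((C \ D).card) * Real.log (1 + Real.exp (kk D * ω + tt D)) := by
      intro ω
      unfold softplusCoeff
      rw [Finset.sum_congr rfl (harg ω)]
      rw [← Finset.sum_filter_add_sum_filter_not C.powerset (fun D => B ⊆ D)]
      congr 1
      have reindex : ∑ D ∈ C.powerset.filter (fun D => B ⊆ D),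
          (-1:ℝ)^((C \ D).card) * Real.log (1 + Real.exp (kk D * ω + tt D))
          = ∑ S ∈ (C \ B).powerset, (-1:ℝ)^(((C \ B) \ S).card)
              * Real.log (1 + Real.exp ((1/2)*ω + ∑ j ∈ S, J j)) := by
        apply Finset.sum_nbij' (fun D => D \ B) (fun S => B ∪ S)
        · intro D hD
          rw [Finset.mem_filter, Finset.mem_powerset] at hD
          rw [Finset.mem_powerset]
          exact Finset.sdiff_subset_sdiff hD.1 (Finset.Subset.refl B)
        · intro S hS
          rw [Finset.mem_powerset] at hS
          rw [Finset.mem_filter, Finset.mem_powerset]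
          refine ⟨Finset.union_subset hBC (hS.trans Finset.sdiff_subset), Finset.subset_union_left⟩
        · intro D hD
          rw [Finset.mem_filter] at hD
          exact Finset.union_sdiff_of_subset hD.2
        · intro S hS
          rw [Finset.mem_powerset] at hS
          exact Finset.union_sdiff_cancel_left
            (Finset.disjoint_of_subset_right hS Finset.disjoint_sdiff)
        · intro D hD
          rw [Finset.mem_filter, Finset.mem_powerset] at hD
          have e1 : (C \ B) \ (D \ B) = C \ D := by
            ext x
            simp only [Finset.mem_sdiff]
            constructor
            · rintro ⟨⟨hxC, hxB⟩, h2⟩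
              exact ⟨hxC, fun hxD => h2 ⟨hxD, hxB⟩⟩
            · rintro ⟨hxC, hxD⟩
              exact ⟨⟨hxC, fun hxB => hxD (hD.2 hxB)⟩, fun h => hxD h.1⟩
          have e2 : kk D = 1/2 := by
            simp only [hkk]
            rw [Finset.inter_comm, Finset.inter_eq_left.mpr hD.2]
            ring
          have e3 : tt D = ∑ j ∈ D \ B, J j := rfl
          rw [e1, e2, e3]
      rw [reindex]
      have hsplit : ∀ S ∈ (C \ B).powerset,
          (-1:ℝ)^(((C \ B) \ S).card) * Real.log (1 + Real.exp ((1/2)*ω + ∑ j ∈ S, J j))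
            = (-1:ℝ)^(((C \ B) \ S).card) * ((1/2)*ω + ∑ j ∈ S, J j)
              + (-1:ℝ)^(((C \ B) \ S).card)
                * Real.log (1 + Real.exp (-((1/2)*ω + ∑ j ∈ S, J j))) := by
        intro S _
        rw [softplus_eq ((1/2)*ω + ∑ j ∈ S, J j)]
        ring
      rw [Finset.sum_congr rfl hsplit, Finset.sum_add_distrib,
        E_eval J (C \ B) hA ((1/2)*ω)]
      have htgt : tgt B J C = if (C \ B).card = 1 then ∑ j ∈ C \ B, J j else 0 := by
        unfold tgt
        by_cases h : (C \ B).card = 1 <;> simp [h, hBC]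
      rw [htgt]
    have hR : Tendsto (fun ω : ℝ => ∑ S ∈ (C \ B).powerset, (-1:ℝ)^(((C \ B) \ S).card)
        * Real.log (1 + Real.exp (-((1/2)*ω + ∑ j ∈ S, J j)))) atTop (nhds 0) := by
      have h := tendsto_finset_sum (C \ B).powerset (f := fun S ω =>
          (-1:ℝ)^(((C \ B) \ S).card) * Real.log (1 + Real.exp (-((1/2)*ω + ∑ j ∈ S, J j))))
          (x := atTop) (a := fun _ => 0) ?_
      · simpa using h
      · intro S _
        have heq : (fun ω : ℝ => -((1/2)*ω + ∑ j ∈ S, J j))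
            = fun ω : ℝ => (-(1/2))*ω + (-(∑ j ∈ S, J j)) := by funext ω; ring
        have h2 : Tendsto (fun ω : ℝ => -((1/2)*ω + ∑ j ∈ S, J j)) atTop atBot := by
          rw [heq]; exact tendsto_lin_atBot (by norm_num) _
        have := (softplus_tendsto_zero.comp h2).const_mul ((-1:ℝ)^(((C \ B) \ S).card))
        simpa using this
    have hS2 : Tendsto (fun ω : ℝ => ∑ D ∈ C.powerset.filter (fun D => ¬ B ⊆ D),
        (-1:ℝ)^((C \ D).card) * Real.log (1 + Real.exp (kk D * ω + tt D))) atTop (nhds 0) := by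
      have h := tendsto_finset_sum (C.powerset.filter (fun D => ¬ B ⊆ D)) (f := fun D ω =>
          (-1:ℝ)^((C \ D).card) * Real.log (1 + Real.exp (kk D * ω + tt D)))
          (x := atTop) (a := fun _ => 0) ?_
      · simpa using h
      · intro D hD
        rw [Finset.mem_filter, Finset.mem_powerset] at hD
        exact hterm0 D hD.1 hD.2
    rw [funext key]
    simpa using (tendsto_const_nhds.add hR).add hS2
  · -- B not a subset of C : everything tends to 0
    have htgt : tgt B J C = 0 := if_neg (fun h => hBC h.1)
    rw [htgt]
    have heqf : (fun ω => softplusCoeff (wfun B B' J ω) (cval B ω) C)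
        = fun ω => ∑ D ∈ C.powerset,
            (-1:ℝ)^((C \ D).card) * Real.log (1 + Real.exp (kk D * ω + tt D)) := by
      funext ω
      unfold softplusCoeff
      exact Finset.sum_congr rfl (harg ω)
    rw [heqf]
    have h := tendsto_finset_sum C.powerset (f := fun D ω =>
        (-1:ℝ)^((C \ D).card) * Real.log (1 + Real.exp (kk D * ω + tt D)))
        (x := atTop) (a := fun _ => 0) ?_
    · simpa using h
    · intro D hD
      rw [Finset.mem_powerset] at hD
      exact hterm0 D hD (fun hBD => hBC (hBD.trans hD))

end MainK
theorem star_tuple_lemma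
    {V : Type*} [Fintype V] [DecidableEq V]
    (B B' : Finset V) (hdisj : Disjoint B B')
    (J : V → ℝ) (ε : ℝ) (hε : 0 < ε) :
    ∃ (w : V → ℝ) (c : ℝ),
      (∀ i, i ∉ B ∪ B' → w i = 0) ∧
      (∀ j ∈ B', |softplusCoeff w c (insert j B) - J j| ≤ ε) ∧
      (∀ C : Finset V, C ≠ B → (∀ j ∈ B', C ≠ insert j B) →
        |softplusCoeff w c C| ≤ ε) := by
  have hev : ∀ᶠ ω in atTop, ∀ C ∈ (Finset.univ : Finset (Finset V)),
      C ⊆ B ∪ B' → C ≠ B →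
      |softplusCoeff (wfun B B' J ω) (cval B ω) C - tgt B J C| ≤ ε := by
    rw [Finset.eventually_all]
    intro C _
    by_cases hsub : C ⊆ B ∪ B'
    · by_cases hCB : C = B
      · exact Filter.Eventually.of_forall (fun ω _ h => absurd hCB h)
      · have h := tendsto_K B B' J hsub hCB
        have h2 := Metric.tendsto_nhds.mp h ε hε
        filter_upwards [h2] with ω hω _ _
        rw [Real.dist_eq] at hω
        linarith [le_of_lt hω]
    · exact Filter.Eventually.of_forall (fun ω h => absurd h hsub)
  obtain ⟨ω, hω⟩ := hev.exists
  refine ⟨wfun B B' J ω, cval B ω, ?_, ?_, ?_⟩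
  · intro i hi
    rw [Finset.mem_union] at hi
    push_neg at hi
    simp [wfun, hi.1, hi.2]
  · intro j hj
    have hjB : j ∉ B := Finset.disjoint_right.mp hdisj hj
    have h1 : insert j B ⊆ B ∪ B' :=
      Finset.insert_subset (Finset.mem_union_right _ hj) Finset.subset_union_left
    have h2 : insert j B ≠ B := fun h => hjB (h ▸ Finset.mem_insert_self j B)
    have h := hω (insert j B) (Finset.mem_univ _) h1 h2
    have hsd : insert j B \ B = {j} := by
      rw [Finset.insert_sdiff_of_notMem _ ?_, Finset.sdiff_self]
      · rfl
      · exact fun h => hjB h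
    have htgt : tgt B J (insert j B) = J j := by
      unfold tgt
      rw [if_pos]
      · rw [hsd, Finset.sum_singleton]
      · exact ⟨Finset.subset_insert j B, by rw [hsd]; rfl⟩
    rwa [htgt] at h
  · intro C hCB hCins
    by_cases hsub : C ⊆ B ∪ B'
    · have h := hω C (Finset.mem_univ _) hsub hCB
      have htgt : tgt B J C = 0 := by
        unfold tgt
        rw [if_neg]
        rintro ⟨hBC, hcard⟩
        obtain ⟨j, hj⟩ := Finset.card_eq_one.mp hcard
        have hjC : j ∈ C := (Finset.mem_sdiff.mp (hj ▸ Finset.mem_singleton_self j)).1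
        have hjB : j ∉ B := (Finset.mem_sdiff.mp (hj ▸ Finset.mem_singleton_self j)).2
        have hjB' : j ∈ B' := by
          rcases Finset.mem_union.mp (hsub hjC) with h' | h'
          · exact absurd h' hjB
          · exact h'
        apply hCins j hjB'
        have : C = B ∪ (C \ B) := (Finset.union_sdiff_of_subset hBC).symm
        rw [this, hj]
        ext x
        simp [or_comm]
      rwa [htgt, sub_zero] at h
    · obtain ⟨a, haC, ha⟩ := Finset.not_subset.mp hsub
      rw [Finset.mem_union] at ha
      push_neg at ha
      have hw : wfun B B' J ω a = 0 := by simp [wfun, ha.1, ha.2]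
      rw [softplusCoeff_eq_zero _ _ haC hw, abs_zero]
      exact le_of_lt hε
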